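/- Let I and J be cyclic intervals of ZMod n with I ⊄ J, J ⊄ I, and I ∩ J ≠ ∅, and suppose I ∪ J ≠ ZMod n. If K is a third cyclic interval with K ∩ I ≠ ∅ and K ∩ J = ∅ and K ⊄ I, then I \ J is a cyclic interval and K ∩ I is contained in the 'end' of I away from J; consequently I \ (J ∪ K) is a cyclic interval. -/

import Mathlib

/-- A cyclic interval `{a, a+1, …, a+l-1}` of `ZMod n`. -/
def IsCyclicInterval {n : ℕ} (S : Set (ZMod n)) : Prop :=
  ∃ (a : ZMod n) (l : ℕ), S = (fun t : ℕ => a + (t : ZMod n)) '' {t | t < l}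

private lemma mem_img {n : ℕ} (a : ZMod n) (l : ℕ) (z : ZMod n) :
    z ∈ (fun t : ℕ => a + (t : ZMod n)) '' {t | t < l} ↔ ∃ t, t < l ∧ a + (t : ZMod n) = z := by
  constructor
  · rintro ⟨t, ht, rfl⟩; exact ⟨t, ht, rfl⟩
  · rintro ⟨t, ht, h⟩; exact ⟨t, ht, h⟩

/-- A set characterized by a `val`-window is a cyclic interval (positive modulus). -/
private lemma cyclic_of_val {n : ℕ} [NeZero n] (q : ZMod n) (S : Set (ZMod n)) (x y : ℕ)
    (hy : y ≤ n) (h : ∀ z, z ∈ S ↔ x ≤ (z - (q + 1)).val ∧ (z - (q + 1)).val < y) :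
    IsCyclicInterval S := by
  refine ⟨q + 1 + (x : ZMod n), y - x, ?_⟩
  ext z
  rw [h z, mem_img]
  constructor
  · rintro ⟨h1, h2⟩
    refine ⟨(z - (q + 1)).val - x, by omega, ?_⟩
    have hz : (((z - (q + 1)).val : ℕ) : ZMod n) = z - (q + 1) := ZMod.natCast_zmod_val _
    have he : x + ((z - (q + 1)).val - x) = (z - (q + 1)).val := by omega
    calc q + 1 + (x : ZMod n) + (((z - (q + 1)).val - x : ℕ) : ZMod n)
        = q + 1 + ((x + ((z - (q + 1)).val - x) : ℕ) : ZMod n) := by push_cast; ring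
      _ = z := by rw [he, hz]; ring
  · rintro ⟨t, ht, rfl⟩
    have hlt : x + t < n := by omega
    have h2 : q + 1 + (x : ZMod n) + (t : ZMod n) - (q + 1) = ((x + t : ℕ) : ZMod n) := by
      push_cast; ring
    rw [h2, ZMod.val_cast_of_lt hlt]
    omega

/-- A cyclic interval avoiding the point `q` is a `val`-window after cutting at `q`. -/
private lemma interval_val {n : ℕ} [NeZero n] (a q : ZMod n) (l : ℕ)
    (hq : ∀ t : ℕ, t < l → a + (t : ZMod n) ≠ q) :
    ∃ α : ℕ, α + l ≤ n ∧
      ∀ z : ZMod n, (∃ t, t < l ∧ a + (t : ZMod n) = z) ↔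
        (α ≤ (z - (q + 1)).val ∧ (z - (q + 1)).val < α + l) := by
  have hn : 1 ≤ n := Nat.one_le_iff_ne_zero.2 (NeZero.ne n)
  have hcast : (((a - (q + 1)).val : ℕ) : ZMod n) = a - (q + 1) := ZMod.natCast_zmod_val _
  have hneg : ((n - 1 : ℕ) : ZMod n) = -1 := by
    push_cast [Nat.cast_sub hn]
    simp [ZMod.natCast_self]
  have claim : ∀ t, t < l →
      (a + (t : ZMod n) - (q + 1)).val = (a - (q + 1)).val + t
        ∧ (a - (q + 1)).val + t + 1 < n := by
    intro t
    induction t with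
    | zero =>
      intro h0
      have hv : (a + ((0 : ℕ) : ZMod n) - (q + 1)).val = (a - (q + 1)).val + 0 := by
        norm_num
      refine ⟨hv, ?_⟩
      have hlt : (a - (q + 1)).val < n := ZMod.val_lt _
      have hne : a ≠ q := by simpa using hq 0 h0
      have hne2 : (a - (q + 1)).val ≠ n - 1 := by
        intro hv'
        apply hne
        have h3 : a - (q + 1) = -1 := by rw [← hcast, hv', hneg]
        linear_combination h3
      omega
    | succ t ih =>
      intro hl
      obtain ⟨hv, hb⟩ := ih (by omega)
      have h1 : a + ((t : ℕ) : ZMod n) - (q + 1) = (((a - (q + 1)).val + t : ℕ) : ZMod n) := by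
        rw [← hv]; exact (ZMod.natCast_zmod_val _).symm
      have h2 : a + ((t + 1 : ℕ) : ZMod n) - (q + 1)
          = (((a - (q + 1)).val + t + 1 : ℕ) : ZMod n) := by
        push_cast at h1 ⊢
        linear_combination h1
      have hval : (a + ((t + 1 : ℕ) : ZMod n) - (q + 1)).val = (a - (q + 1)).val + (t + 1) := by
        rw [h2, ZMod.val_cast_of_lt hb]
        omega
      refine ⟨hval, ?_⟩
      have hne : a + ((t + 1 : ℕ) : ZMod n) ≠ q := hq (t + 1) hl
      have hne2 : (a - (q + 1)).val + t + 1 ≠ n - 1 := by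
        intro hv'
        apply hne
        have h3 : a + ((t + 1 : ℕ) : ZMod n) - (q + 1)
            = (((a - (q + 1)).val + t + 1 : ℕ) : ZMod n) := h2
        rw [hv', hneg] at h3
        linear_combination h3
      omega
  have hαl : (a - (q + 1)).val + l ≤ n := by
    rcases Nat.eq_zero_or_pos l with h0 | h0
    · have := ZMod.val_lt (a - (q + 1)); omega
    · have h1 := (claim (l - 1) (by omega)).2
      omega
  refine ⟨(a - (q + 1)).val, hαl, fun z => ?_⟩
  constructor
  · rintro ⟨t, ht, rfl⟩
    have h1 := (claim t ht).1
    omega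
  · rintro ⟨h1, h2⟩
    refine ⟨(z - (q + 1)).val - (a - (q + 1)).val, by omega, ?_⟩
    have hz : (((z - (q + 1)).val : ℕ) : ZMod n) = z - (q + 1) := ZMod.natCast_zmod_val _
    have he : (a - (q + 1)).val + ((z - (q + 1)).val - (a - (q + 1)).val)
        = (z - (q + 1)).val := by omega
    calc a + (((z - (q + 1)).val - (a - (q + 1)).val : ℕ) : ZMod n)
        = (a - (q + 1)) + (((z - (q + 1)).val - (a - (q + 1)).val : ℕ) : ZMod n) + (q + 1) := by
          ring
      _ = (((a - (q + 1)).val : ℕ) : ZMod n)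
            + (((z - (q + 1)).val - (a - (q + 1)).val : ℕ) : ZMod n) + (q + 1) := by rw [hcast]
      _ = (((a - (q + 1)).val + ((z - (q + 1)).val - (a - (q + 1)).val) : ℕ) : ZMod n)
            + (q + 1) := by push_cast; ring
      _ = (((z - (q + 1)).val : ℕ) : ZMod n) + (q + 1) := by rw [he]
      _ = z := by rw [hz]; ring

/-- Membership in a cyclic interval through `q = b + j`, in cut coordinates. -/
private lemma compl_val {n : ℕ} [NeZero n] (b q : ZMod n) (m j : ℕ) (hm : m ≤ n) (hj : j < m)
    (hq : b + (j : ZMod n) = q) :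
    ∀ z : ZMod n, (∃ t, t < m ∧ b + (t : ZMod n) = z) ↔
      ((z - (q + 1)).val < m - (j + 1) ∨ n - (j + 1) ≤ (z - (q + 1)).val) := by
  intro z
  have hwn : (z - (q + 1)).val < n := ZMod.val_lt _
  have hzw : (((z - (q + 1)).val : ℕ) : ZMod n) = z - (q + 1) := ZMod.natCast_zmod_val _
  have hz : b + ((j + 1 + (z - (q + 1)).val : ℕ) : ZMod n) = z := by
    push_cast
    linear_combination hzw + hq
  constructor
  · rintro ⟨t, ht, rfl⟩
    have he : (t : ZMod n) = ((j + 1 + (b + (t : ZMod n) - (q + 1)).val : ℕ) : ZMod n) := by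
      linear_combination - hz
    have hmod : t % n = (j + 1 + (b + (t : ZMod n) - (q + 1)).val) % n :=
      (ZMod.natCast_eq_natCast_iff _ _ _).1 he
    rw [Nat.mod_eq_of_lt (lt_of_lt_of_le ht hm)] at hmod
    rcases Nat.lt_or_ge (j + 1 + (b + (t : ZMod n) - (q + 1)).val) n with hc | hc
    · rw [Nat.mod_eq_of_lt hc] at hmod
      omega
    · omega
  · intro hcase
    rcases hcase with hc | hc
    · exact ⟨j + 1 + (z - (q + 1)).val, by omega, hz⟩
    · refine ⟨j + 1 + (z - (q + 1)).val - n, by omega, ?_⟩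
      have hns : j + 1 + (z - (q + 1)).val - n + n = j + 1 + (z - (q + 1)).val := by omega
      have hcc : ((j + 1 + (z - (q + 1)).val - n : ℕ) : ZMod n)
          = ((j + 1 + (z - (q + 1)).val : ℕ) : ZMod n) := by
        calc ((j + 1 + (z - (q + 1)).val - n : ℕ) : ZMod n)
            = ((j + 1 + (z - (q + 1)).val - n : ℕ) : ZMod n) + ((n : ℕ) : ZMod n) := by
              rw [ZMod.natCast_self]; ring
          _ = ((j + 1 + (z - (q + 1)).val - n + n : ℕ) : ZMod n) := by push_cast; ring
          _ = _ := by rw [hns]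
      rw [hcc]
      exact hz

private def e0 : ZMod 0 →+* ℤ := ZMod.castHom (dvd_refl 0) ℤ

private lemma e0_inj : Function.Injective (e0 : ZMod 0 → ℤ) := fun u v h => by
  have h2 : ((e0 u : ℤ) : ZMod 0) = ((e0 v : ℤ) : ZMod 0) := by rw [h]
  exact h2

private lemma z_interval (S : Set (ZMod 0)) (h : IsCyclicInterval S) :
    ∃ x y : ℤ, ∀ z, z ∈ S ↔ x ≤ e0 z ∧ e0 z < y := by
  obtain ⟨a, l, rfl⟩ := h
  refine ⟨e0 a, e0 a + l, fun z => ?_⟩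
  rw [mem_img]
  constructor
  · rintro ⟨t, ht, rfl⟩
    rw [map_add, map_natCast]
    omega
  · rintro ⟨h1, h2⟩
    refine ⟨(e0 z - e0 a).toNat, by omega, ?_⟩
    apply e0_inj
    rw [map_add, map_natCast]
    omega

private lemma z_cyclic (S : Set (ZMod 0)) (x y : ℤ) (h : ∀ z, z ∈ S ↔ x ≤ e0 z ∧ e0 z < y) :
    IsCyclicInterval S := by
  have hx : e0 (Int.cast x : ZMod 0) = x := rfl
  refine ⟨(Int.cast x : ZMod 0), (y - x).toNat, ?_⟩
  ext z
  rw [h z, mem_img (Int.cast x : ZMod 0) (y - x).toNat z]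
  constructor
  · rintro ⟨h1, h2⟩
    refine ⟨(e0 z - x).toNat, by omega, ?_⟩
    apply e0_inj
    rw [map_add, map_natCast, hx]
    omega
  · rintro ⟨t, ht, rfl⟩
    rw [map_add, map_natCast, hx]
    omega

theorem stmt_12 {n : ℕ} (I J K : Set (ZMod n))
    (hI : IsCyclicInterval I) (hJ : IsCyclicInterval J) (hK : IsCyclicInterval K)
    (hIJ : ¬ I ⊆ J) (hJI : ¬ J ⊆ I) (hIJne : (I ∩ J).Nonempty)
    (hIJuniv : I ∪ J ≠ Set.univ)
    (hKI : (K ∩ I).Nonempty) (hKJ : K ∩ J = ∅) (hKnI : ¬ K ⊆ I) :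
    IsCyclicInterval (I \ J) ∧ IsCyclicInterval (I \ (J ∪ K)) := by
  cases n with
  | zero =>
    obtain ⟨x1, y1, hIc⟩ := z_interval I hI
    obtain ⟨x2, y2, hJc⟩ := z_interval J hJ
    obtain ⟨x3, y3, hKc⟩ := z_interval K hK
    have hs1 : x2 ≤ x1 ∨ y1 ≤ y2 := by
      by_contra hcon
      push_neg at hcon
      refine hJI fun z hz => (hIc z).2 ?_
      have := (hJc z).1 hz
      omega
    obtain ⟨x, y, hx1, hy1, hd⟩ : ∃ x y : ℤ, x1 ≤ x ∧ y ≤ y1 ∧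
        ∀ z, z ∈ I \ J ↔ x ≤ e0 z ∧ e0 z < y := by
      rcases hs1 with hc | hc
      · refine ⟨max x1 y2, y1, le_max_left _ _, le_refl _, fun z => ?_⟩
        simp only [Set.mem_diff, hIc z, hJc z]
        omega
      · refine ⟨x1, min y1 x2, le_refl _, min_le_left _ _, fun z => ?_⟩
        simp only [Set.mem_diff, hIc z, hJc z]
        omega
    refine ⟨z_cyclic _ x y hd, ?_⟩
    have hs2 : x3 ≤ x ∨ y ≤ y3 := by
      by_contra hcon
      push_neg at hcon
      refine hKnI fun z hz => (hIc z).2 ?_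
      have := (hKc z).1 hz
      omega
    have hd2 : ∀ z, z ∈ I \ (J ∪ K) ↔
        ((x ≤ e0 z ∧ e0 z < y) ∧ ¬ (x3 ≤ e0 z ∧ e0 z < y3)) := by
      intro z
      have h1 : z ∈ I \ (J ∪ K) ↔ (z ∈ I \ J ∧ z ∉ K) := by
        simp only [Set.mem_diff, Set.mem_union]
        tauto
      rw [h1, hd z, hKc z]
    rcases hs2 with hc | hc
    · refine z_cyclic _ (max x y3) y fun z => ?_
      rw [hd2 z]
      omega
    · refine z_cyclic _ x (min y x3) fun z => ?_
      rw [hd2 z]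
      omega
  | succ n' =>
    obtain ⟨a, l, hIdef⟩ := hI
    obtain ⟨b, m, hJdef⟩ := hJ
    obtain ⟨c, k, hKdef⟩ := hK
    obtain ⟨q, hqJ, hqI⟩ := Set.not_subset.1 hJI
    have hqK : q ∉ K := by
      intro hqK'
      have hmem : q ∈ K ∩ J := ⟨hqK', hqJ⟩
      rw [hKJ] at hmem
      exact hmem
    have hImem : ∀ z, z ∈ I ↔ ∃ t, t < l ∧ a + (t : ZMod (n' + 1)) = z := by
      intro z; rw [hIdef, mem_img]
    have hJmem : ∀ z, z ∈ J ↔ ∃ t, t < m ∧ b + (t : ZMod (n' + 1)) = z := by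
      intro z; rw [hJdef, mem_img]
    have hKmem : ∀ z, z ∈ K ↔ ∃ t, t < k ∧ c + (t : ZMod (n' + 1)) = z := by
      intro z; rw [hKdef, mem_img]
    have hInotq : ∀ t : ℕ, t < l → a + (t : ZMod (n' + 1)) ≠ q := fun t ht he =>
      hqI ((hImem q).2 ⟨t, ht, he⟩)
    have hKnotq : ∀ t : ℕ, t < k → c + (t : ZMod (n' + 1)) ≠ q := fun t ht he =>
      hqK ((hKmem q).2 ⟨t, ht, he⟩)
    obtain ⟨α, hαl, hIc⟩ := interval_val a q l hInotq
    obtain ⟨γ, hγk, hKc⟩ := interval_val c q k hKnotq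
    have hIcc : ∀ z, z ∈ I ↔
        (α ≤ (z - (q + 1)).val ∧ (z - (q + 1)).val < α + l) :=
      fun z => (hImem z).trans (hIc z)
    have hKcc : ∀ z, z ∈ K ↔
        (γ ≤ (z - (q + 1)).val ∧ (z - (q + 1)).val < γ + k) :=
      fun z => (hKmem z).trans (hKc z)
    obtain ⟨j0, hj0, hbj⟩ := (hJmem q).1 hqJ
    have hJmem' : ∀ z, z ∈ J ↔
        ∃ t, t < min m (n' + 1) ∧ b + (t : ZMod (n' + 1)) = z := by
      intro z
      rw [hJmem z]
      constructor
      · rintro ⟨t, ht, rfl⟩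
        have hlt : t % (n' + 1) < n' + 1 := Nat.mod_lt _ (by omega)
        have hle : t % (n' + 1) ≤ t := Nat.mod_le _ _
        exact ⟨t % (n' + 1), by omega, by rw [ZMod.natCast_mod]⟩
      · rintro ⟨t, ht, h⟩
        exact ⟨t, by omega, h⟩
    have hjlt : j0 % (n' + 1) < min m (n' + 1) := by
      have h1 : j0 % (n' + 1) < n' + 1 := Nat.mod_lt _ (by omega)
      have h2 : j0 % (n' + 1) ≤ j0 := Nat.mod_le _ _
      omega
    have hbj' : b + ((j0 % (n' + 1) : ℕ) : ZMod (n' + 1)) = q := by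
      rw [ZMod.natCast_mod]; exact hbj
    have hJcc : ∀ z, z ∈ J ↔
        ((z - (q + 1)).val < min m (n' + 1) - (j0 % (n' + 1) + 1)
          ∨ (n' + 1) - (j0 % (n' + 1) + 1) ≤ (z - (q + 1)).val) :=
      fun z => (hJmem' z).trans
        (compl_val b q (min m (n' + 1)) (j0 % (n' + 1)) (min_le_right _ _) hjlt hbj' z)
    have hval : ∀ z : ZMod (n' + 1), (z - (q + 1)).val < n' + 1 := fun z => ZMod.val_lt _
    have hd : ∀ z, z ∈ I \ J ↔
        (max α (min m (n' + 1) - (j0 % (n' + 1) + 1)) ≤ (z - (q + 1)).val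
          ∧ (z - (q + 1)).val < min (α + l) ((n' + 1) - (j0 % (n' + 1) + 1))) := by
      intro z
      rw [Set.mem_diff, hIcc z, hJcc z]
      have := hval z
      omega
    refine ⟨cyclic_of_val q _ _ _ (by omega) hd, ?_⟩
    have hs2 : γ ≤ max α (min m (n' + 1) - (j0 % (n' + 1) + 1))
        ∨ min (α + l) ((n' + 1) - (j0 % (n' + 1) + 1)) ≤ γ + k := by
      by_contra hcon
      push_neg at hcon
      refine hKnI fun z hz => (hIcc z).2 ?_
      have := (hKcc z).1 hz
      omega
    have hd2 : ∀ z, z ∈ I \ (J ∪ K) ↔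
        ((max α (min m (n' + 1) - (j0 % (n' + 1) + 1)) ≤ (z - (q + 1)).val
            ∧ (z - (q + 1)).val < min (α + l) ((n' + 1) - (j0 % (n' + 1) + 1)))
          ∧ ¬ (γ ≤ (z - (q + 1)).val ∧ (z - (q + 1)).val < γ + k)) := by
      intro z
      have h1 : z ∈ I \ (J ∪ K) ↔ (z ∈ I \ J ∧ z ∉ K) := by
        simp only [Set.mem_diff, Set.mem_union]
        tauto
      rw [h1, hd z, hKcc z]
    rcases hs2 with hc | hc
    · refine cyclic_of_val q _
        (max (max α (min m (n' + 1) - (j0 % (n' + 1) + 1))) (γ + k))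
        (min (α + l) ((n' + 1) - (j0 % (n' + 1) + 1))) (by omega) fun z => ?_
      rw [hd2 z]
      omega
    · refine cyclic_of_val q _
        (max α (min m (n' + 1) - (j0 % (n' + 1) + 1)))
        (min (min (α + l) ((n' + 1) - (j0 % (n' + 1) + 1))) γ) (by omega) fun z => ?_
      rw [hd2 z]
      omega
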